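/- Let g be a directed graph with source s in which every vertex has in-degree at most 1. Define, for a set B of vertices not containing s, f(B) to be the number of vertices reachable from s in the induced subgraph on V(g) \ B. Then f is supermodular: for all sets X ⊆ Y of vertices with s ∉ Y and any vertex u ∉ Y with u ≠ s, f(X) − f(X ∪ {u}) ≥ f(Y) − f(Y ∪ {u}). -/

import Mathlib

/-- Reachability from `s` in the induced subgraph obtained by deleting `B`. -/
def reachOutside {V : Type*} (adj : V → V → Prop) (B : Set V) (s v : V) : Prop :=
  Relation.ReflTransGen (fun a b => adj a b ∧ a ∉ B ∧ b ∉ B) s v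

/-- `fCount adj s B` is the number of vertices reachable from `s` after deleting
the vertex set `B`. -/
noncomputable def fCount {V : Type*} (adj : V → V → Prop) (s : V) (B : Set V) : ℕ :=
  {v | reachOutside adj B s v}.ncard

lemma reach_mono {V : Type*} {adj : V → V → Prop} {B B' : Set V} {s v : V}
    (hBB : B ⊆ B') (h : reachOutside adj B' s v) : reachOutside adj B s v :=
  Relation.ReflTransGen.mono (p := fun a b => adj a b ∧ a ∉ B ∧ b ∉ B) (fun a b ⟨h1, h2, h3⟩ =>
    ⟨h1, fun hm => h2 (hBB hm), fun hm => h3 (hBB hm)⟩) s v h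

lemma reach_union {V : Type*} {adj : V → V → Prop}
    (hindeg : ∀ v a b, adj a v → adj b v → a = b) {B B' : Set V} {s v : V}
    (h1 : reachOutside adj B s v) (h2 : reachOutside adj B' s v) :
    reachOutside adj (B ∪ B') s v := by
  unfold reachOutside at *
  revert h2
  induction h1 with
  | refl => intro _; exact Relation.ReflTransGen.refl
  | @tail a c hsa hac ih =>
    intro h2
    rcases h2.cases_tail with h | ⟨b, hsb, hbc⟩
    · subst h; exact Relation.ReflTransGen.refl
    · have hba : b = a := hindeg c b a hbc.1 hac.1
      subst hba
      exact (ih hsb).tail ⟨hac.1,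
        by simp only [Set.mem_union, not_or]; exact ⟨hac.2.1, hbc.2.1⟩,
        by simp only [Set.mem_union, not_or]; exact ⟨hac.2.2, hbc.2.2⟩⟩

theorem stmt4 {V : Type*} [Fintype V] (adj : V → V → Prop) (s : V)
    (hindeg : ∀ v a b, adj a v → adj b v → a = b) :
    ∀ (X Y : Set V) (u : V), X ⊆ Y → s ∉ Y → u ∉ Y → u ≠ s →
      (fCount adj s X : ℤ) - fCount adj s (X ∪ {u}) ≥
        (fCount adj s Y : ℤ) - fCount adj s (Y ∪ {u}) := by
  intro X Y u hXY hsY huY hus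
  set A := {v | reachOutside adj X s v}
  set A' := {v | reachOutside adj (X ∪ {u}) s v}
  set C := {v | reachOutside adj Y s v}
  set C' := {v | reachOutside adj (Y ∪ {u}) s v}
  have hA'A : A' ⊆ A := fun v hv => reach_mono Set.subset_union_left hv
  have hC'C : C' ⊆ C := fun v hv => reach_mono Set.subset_union_left hv
  have hdiff : C \ C' ⊆ A \ A' := by
    rintro v ⟨hvC, hvC'⟩
    refine ⟨reach_mono hXY hvC, fun hvA' => hvC' ?_⟩
    have := reach_union hindeg hvC hvA'
    exact reach_mono (Set.union_subset Set.subset_union_left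
      (Set.subset_union_right.trans Set.subset_union_right)) this
  have h1 : A'.ncard + (A \ A').ncard = A.ncard := by
    rw [← Set.ncard_union_eq (Set.disjoint_sdiff_right) (Set.toFinite _) (Set.toFinite _)]
    congr 1
    rw [Set.union_diff_cancel hA'A]
  have h2 : C'.ncard + (C \ C').ncard = C.ncard := by
    rw [← Set.ncard_union_eq (Set.disjoint_sdiff_right) (Set.toFinite _) (Set.toFinite _)]
    congr 1
    rw [Set.union_diff_cancel hC'C]
  have h3 : (C \ C').ncard ≤ (A \ A').ncard := Set.ncard_le_ncard hdiff (Set.toFinite _)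
  show (A.ncard : ℤ) - A'.ncard ≥ (C.ncard : ℤ) - C'.ncard
  omega
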